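/- Let v be a time-dependent C¹ velocity field on ℝ³ with flow map α and let G be a bounded open set with 0 < vol(G) < ∞. Then the volume function V(t) = vol(G_t) of the comoving domain G_t = α(t,G) is differentiable and satisfies the Liouville formula V'(t) = ∫_{G_t} (div_x v)(t,x) d³x, where div_x v = ∂_a v^a. -/

import Mathlib

open MeasureTheory Real
open scoped ENNReal
noncomputable section
set_option maxHeartbeats 1000000

/-- ℝ³ with Cartesian coordinates. -/
abbrev V3 := Fin 3 → ℝ

/-- Partial derivative `∂_i f (x)` of a scalar function on ℝ³. -/
def pd (f : V3 → ℝ) (i : Fin 3) (x : V3) : ℝ := fderiv ℝ f x (Pi.single i 1)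

/-- `α` is a comoving flow map for the time-dependent velocity field `v` with
initial time `t₀`: `α(t₀,·) = id`, each `α(t,·)` is a C¹ diffeomorphism of ℝ³,
and `∂ₜ α(t,x) = v(t, α(t,x))`. -/
def IsFlowMap (v : ℝ → V3 → V3) (t₀ : ℝ) (α : ℝ → V3 → V3) : Prop :=
  (∀ x, α t₀ x = x) ∧
  (∀ t, Function.Bijective (α t) ∧ ContDiff ℝ 1 (α t) ∧
    ContDiff ℝ 1 (Function.invFun (α t))) ∧
  (∀ t x, HasDerivAt (fun s => α s x) (v t (α t x)) t)

namespace Liouville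

open Set Metric

/-- Spatial derivative of the velocity field. -/
def vd (v : ℝ → V3 → V3) (t : ℝ) (y : V3) : V3 →L[ℝ] V3 :=
  (fderiv ℝ (fun p : ℝ × V3 => v p.1 p.2) (t, y)).comp (ContinuousLinearMap.inr ℝ ℝ V3)

/-- Spatial derivative of the flow. -/
def A (α : ℝ → V3 → V3) (s : ℝ) (x : V3) : V3 →L[ℝ] V3 := fderiv ℝ (α s) x

/-- The matrix of a continuous linear map on `V3`. -/
def matOf (L : V3 →L[ℝ] V3) : Matrix (Fin 3) (Fin 3) ℝ :=
  Matrix.of fun i j => L (Pi.single j 1) i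

section basic

lemma basis_expand (w : V3) : w = ∑ j, (w j) • (Pi.single j 1 : V3) := by
  funext k
  simp [Finset.sum_apply, Pi.single_apply]

lemma clm_ext_basis {L₁ L₂ : V3 →L[ℝ] V3}
    (h : ∀ j, L₁ (Pi.single j 1) = L₂ (Pi.single j 1)) : L₁ = L₂ := by
  refine ContinuousLinearMap.ext fun w => ?_
  have e : ∀ L : V3 →L[ℝ] V3, L w = ∑ j, (w j) • L (Pi.single j 1) := by
    intro L
    conv_lhs => rw [basis_expand w]
    rw [map_sum]
    exact Finset.sum_congr rfl fun j _ => L.map_smul _ _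
  rw [e L₁, e L₂]
  exact Finset.sum_congr rfl fun j _ => by rw [h j]

lemma toMatrix'_eq_matOf (L : V3 →L[ℝ] V3) :
    LinearMap.toMatrix' (L : V3 →ₗ[ℝ] V3) = matOf L := by
  apply Matrix.ext
  intro i j
  rw [LinearMap.toMatrix'_apply]
  have e : (fun j' => if j' = j then (1:ℝ) else 0) = (Pi.single j 1 : V3) := by
    funext j'
    simp [Pi.single_apply]
  rfl

lemma matOf_det (L : V3 →L[ℝ] V3) : (matOf L).det = L.det := by
  show (matOf L).det = LinearMap.det (L : V3 →ₗ[ℝ] V3)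
  rw [← LinearMap.det_toMatrix' (L : V3 →ₗ[ℝ] V3), toMatrix'_eq_matOf]

/-- Reassembling a continuous linear map from a matrix. -/
def toCLM : Matrix (Fin 3) (Fin 3) ℝ →ₗ[ℝ] (V3 →L[ℝ] V3) :=
  (LinearMap.toContinuousLinearMap.toLinearMap).comp
    (Matrix.toLin' : Matrix (Fin 3) (Fin 3) ℝ ≃ₗ[ℝ] ((Fin 3 → ℝ) →ₗ[ℝ] Fin 3 → ℝ)).toLinearMap

lemma toCLM_cont : Continuous toCLM :=
  toCLM.continuous_of_finiteDimensional

lemma toCLM_matOf (L : V3 →L[ℝ] V3) : toCLM (matOf L) = L := by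
  apply clm_ext_basis
  intro j
  show Matrix.toLin' (matOf L) (Pi.single j 1) = L (Pi.single j 1)
  rw [Matrix.toLin'_apply]
  funext i
  simp [Matrix.mulVec_single, matOf]

lemma matOf_entry_le (L : V3 →L[ℝ] V3) (i j : Fin 3) : |matOf L i j| ≤ ‖L‖ := by
  have h1 : |matOf L i j| ≤ ‖L (Pi.single j 1)‖ := by
    simpa [matOf] using norm_le_pi_norm (L (Pi.single j 1)) i
  refine h1.trans ?_
  have h2 : ‖(Pi.single j 1 : V3)‖ ≤ 1 := by
    apply (pi_norm_le_iff_of_nonneg zero_le_one).2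
    intro k
    simp only [Pi.single_apply]
    split <;> simp
  calc ‖L (Pi.single j 1)‖ ≤ ‖L‖ * ‖(Pi.single j 1 : V3)‖ := L.le_opNorm _
    _ ≤ ‖L‖ * 1 := by nlinarith [norm_nonneg L]
    _ = ‖L‖ := mul_one _

lemma abs_det_le {L : V3 →L[ℝ] V3} {C : ℝ} (h : ‖L‖ ≤ C) :
    |L.det| ≤ 6 * C ^ 3 := by
  have hC : 0 ≤ C := le_trans (norm_nonneg L) h
  have he : ∀ i j, |matOf L i j| ≤ C := fun i j => (matOf_entry_le L i j).trans h
  have hcube : ∀ i₁ j₁ i₂ j₂ i₃ j₃ : Fin 3,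
      |matOf L i₁ j₁ * (matOf L i₂ j₂ * matOf L i₃ j₃)| ≤ C ^ 3 := by
    intro i₁ j₁ i₂ j₂ i₃ j₃
    rw [abs_mul, abs_mul]
    calc |matOf L i₁ j₁| * (|matOf L i₂ j₂| * |matOf L i₃ j₃|) ≤ C * (C * C) := by
          apply mul_le_mul (he _ _) _ (by positivity) hC
          exact mul_le_mul (he _ _) (he _ _) (abs_nonneg _) hC
      _ = C ^ 3 := by ring
  rw [← matOf_det, Matrix.det_fin_three]
  obtain ⟨a1, b1⟩ := abs_le.1 (hcube 0 0 1 1 2 2)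
  obtain ⟨a2, b2⟩ := abs_le.1 (hcube 0 0 1 2 2 1)
  obtain ⟨a3, b3⟩ := abs_le.1 (hcube 0 1 1 0 2 2)
  obtain ⟨a4, b4⟩ := abs_le.1 (hcube 0 1 1 2 2 0)
  obtain ⟨a5, b5⟩ := abs_le.1 (hcube 0 2 1 0 2 1)
  obtain ⟨a6, b6⟩ := abs_le.1 (hcube 0 2 1 1 2 0)
  rw [abs_le]
  constructor <;> [nlinarith; nlinarith]

lemma det_cont : Continuous fun L : V3 →L[ℝ] V3 => L.det := by
  have h1 : Continuous fun L : V3 →L[ℝ] V3 => matOf L := by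
    apply continuous_pi; intro i; apply continuous_pi; intro j
    exact (continuous_apply i).comp (ContinuousLinearMap.apply ℝ V3 (Pi.single j 1)).continuous
  have h2 := h1.matrix_det
  simpa only [matOf_det] using h2

end basic

section velocity

variable {v : ℝ → V3 → V3} (hv : ContDiff ℝ 1 (fun p : ℝ × V3 => v p.1 p.2))
include hv

lemma hasFDerivAt_vd (t : ℝ) (y : V3) : HasFDerivAt (v t) (vd v t y) y := by
  have h1 : HasFDerivAt (fun p : ℝ × V3 => v p.1 p.2)
      (fderiv ℝ (fun p : ℝ × V3 => v p.1 p.2) (t, y)) (t, y) :=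
    (hv.differentiable one_ne_zero _).hasFDerivAt
  have h2 : HasFDerivAt (fun x : V3 => ((t, x) : ℝ × V3))
      (ContinuousLinearMap.inr ℝ ℝ V3) y := hasFDerivAt_prodMk_right t y
  exact h1.comp y h2

lemma vd_cont : Continuous fun p : ℝ × V3 => vd v p.1 p.2 := by
  have h := hv.continuous_fderiv one_ne_zero
  exact h.clm_comp continuous_const

end velocity

section flow

variable {v : ℝ → V3 → V3} {t₀ : ℝ} {α : ℝ → V3 → V3}

lemma hA (hα : IsFlowMap v t₀ α) (s : ℝ) (x : V3) : HasFDerivAt (α s) (A α s x) x :=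
  ((hα.2.1 s).2.1.differentiable one_ne_zero x).hasFDerivAt

lemma contA (hα : IsFlowMap v t₀ α) (s : ℝ) : Continuous (A α s) :=
  ((hα.2.1 s).2.1.continuous_fderiv one_ne_zero)

lemma traj_cont (hα : IsFlowMap v t₀ α) (x : V3) : Continuous fun s => α s x :=
  continuous_iff_continuousAt.2 fun s => (hα.2.2 s x).continuousAt

/-- Forward Grönwall estimate on an interval, assuming both trajectories stay in a
set where the field is Lipschitz. -/
lemma gron_fwd {w : ℝ → V3 → V3} {f g : ℝ → V3} {a b : ℝ} {K : Set V3} {M : NNReal} {δ : ℝ}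
    (hf' : ∀ u, HasDerivAt f (w u (f u)) u) (hg' : ∀ u, HasDerivAt g (w u (g u)) u)
    (hlip : ∀ u ∈ Icc a b, LipschitzOnWith M (w u) K)
    (hfK : ∀ u ∈ Ico a b, f u ∈ K) (hgK : ∀ u ∈ Ico a b, g u ∈ K)
    (hd : dist (f a) (g a) ≤ δ) :
    ∀ u ∈ Icc a b, dist (f u) (g u) ≤ δ * exp (M * (u - a)) := by
  have hlip' : ∀ u, LipschitzOnWith M (w u)
      (if u ∈ Icc a b then K else (∅ : Set V3)) := by
    intro u
    by_cases hu : u ∈ Icc a b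
    · rw [if_pos hu]; exact hlip u hu
    · rw [if_neg hu]
      intro z hz
      exact absurd hz (Set.notMem_empty z)
  intro u hu
  refine dist_le_of_trajectories_ODE_of_mem (fun u _ => hlip' u)
    (continuous_iff_continuousAt.2 fun s => (hf' s).continuousAt).continuousOn
    (fun s _ => (hf' s).hasDerivWithinAt) ?_
    (continuous_iff_continuousAt.2 fun s => (hg' s).continuousAt).continuousOn
    (fun s _ => (hg' s).hasDerivWithinAt) ?_ hd u hu
  · intro s hs
    rw [if_pos (Ico_subset_Icc_self hs)]
    exact hfK s hs
  · intro s hs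
    rw [if_pos (Ico_subset_Icc_self hs)]
    exact hgK s hs

lemma rev_hasDeriv {f : ℝ → V3} {w : ℝ → V3 → V3} (c : ℝ)
    (hf : ∀ u, HasDerivAt f (w u (f u)) u) :
    ∀ u, HasDerivAt (fun s => f (c - s)) (-(w (c - u) (f (c - u)))) u := by
  intro u
  have h1 : HasDerivAt (fun s : ℝ => c - s) (-1) u := by
    simpa using (hasDerivAt_id u).const_sub c
  have h2 := (hf (c - u)).scomp (𝕜 := ℝ) (𝕜' := ℝ) u h1
  simpa [Function.comp_def] using h2

lemma lipschitzOnWith_neg {w : V3 → V3} {K : Set V3} {M : NNReal}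
    (h : LipschitzOnWith M w K) : LipschitzOnWith M (fun y => -(w y)) K := by
  intro x hx y hy
  simpa [edist_neg_neg] using h hx hy

/-- Two-sided Grönwall estimate anchored at the initial time. -/
lemma gron (hα : IsFlowMap v t₀ α) {a b : ℝ} {K : Set V3} {M : NNReal}
    (hab : t₀ ∈ Icc a b)
    (hlip : ∀ u ∈ Icc a b, LipschitzOnWith M (v u) K)
    {x y : V3}
    (hxK : ∀ u ∈ Icc a b, α u x ∈ K) (hyK : ∀ u ∈ Icc a b, α u y ∈ K) :
    ∀ u ∈ Icc a b, dist (α u x) (α u y) ≤ dist x y * exp (M * (b - a)) := by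
  have hδ : (0:ℝ) ≤ dist x y := dist_nonneg
  have hexp : ∀ c : ℝ, c ≤ b - a → exp (M * c) ≤ exp (M * (b - a)) := fun c hc =>
    exp_le_exp.2 (mul_le_mul_of_nonneg_left hc M.coe_nonneg)
  intro u hu
  rcases le_total t₀ u with h | h
  · have key := gron_fwd (w := v) (f := fun s => α s x) (g := fun s => α s y)
      (a := t₀) (b := u) (K := K) (M := M) (δ := dist x y)
      (fun s => hα.2.2 s x) (fun s => hα.2.2 s y)
      (fun s hs => hlip s ⟨hab.1.trans hs.1, hs.2.trans hu.2⟩)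
      (fun s hs => hxK s ⟨hab.1.trans hs.1, (le_of_lt hs.2).trans hu.2⟩)
      (fun s hs => hyK s ⟨hab.1.trans hs.1, (le_of_lt hs.2).trans hu.2⟩)
      (by show dist (α t₀ x) (α t₀ y) ≤ dist x y
          rw [hα.1 x, hα.1 y])
      u ⟨h, le_refl u⟩
    refine key.trans (mul_le_mul_of_nonneg_left (hexp _ ?_) hδ)
    have := hu.1; have := hu.2; have := hab.1; have := hab.2; linarith
  · set c := (2:ℝ) * t₀ with hc
    have key := gron_fwd (w := fun s z => -(v (c - s) z))
      (f := fun s => α (c - s) x) (g := fun s => α (c - s) y)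
      (a := t₀) (b := c - u) (K := K) (M := M) (δ := dist x y)
      (rev_hasDeriv c (fun s => hα.2.2 s x))
      (rev_hasDeriv c (fun s => hα.2.2 s y))
      (fun s hs => lipschitzOnWith_neg (hlip (c - s) ⟨by simp only [hc]; linarith [hs.2, hu.1], by simp only [hc]; linarith [hs.1, hab.2]⟩))
      (fun s hs => hxK (c - s) ⟨by simp only [hc]; linarith [hs.2, hu.1], by simp only [hc]; linarith [hs.1, hab.2]⟩)
      (fun s hs => hyK (c - s) ⟨by simp only [hc]; linarith [hs.2, hu.1], by simp only [hc]; linarith [hs.1, hab.2]⟩)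
      (by show dist (α (c - t₀) x) (α (c - t₀) y) ≤ dist x y
          rw [show c - t₀ = t₀ by simp only [hc]; ring, hα.1 x, hα.1 y])
      (c - u) ⟨by simp only [hc]; linarith, le_refl _⟩
    replace key : dist (α u x) (α u y) ≤ dist x y * exp (↑M * (c - u - t₀)) := by
      simpa [show c - (c - u) = u by ring] using key
    refine key.trans (mul_le_mul_of_nonneg_left (hexp _ ?_) hδ)
    simp only [hc]
    have := hu.1; have := hab.2; have := hab.1; linarith

/-- Forward bootstrap: trajectories starting close to a reference trajectory stay
in the 1-neighborhood `K` of the reference tube `Γ`. -/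
lemma boot_fwd {w : ℝ → V3 → V3} {f g : ℝ → V3} {t₁ b : ℝ} {Γ K : Set V3} {M : NNReal} {r : ℝ}
    (htb : t₁ ≤ b)
    (hf' : ∀ u, HasDerivAt f (w u (f u)) u) (hg' : ∀ u, HasDerivAt g (w u (g u)) u)
    (hlip : ∀ u ∈ Icc t₁ b, LipschitzOnWith M (w u) K)
    (hgΓ : ∀ u ∈ Icc t₁ b, g u ∈ Γ)
    (hΓK : ∀ z ∈ Γ, ∀ y : V3, dist y z ≤ 1 → y ∈ K)
    (hd0 : dist (f t₁) (g t₁) ≤ r) (hr0 : 0 ≤ r)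
    (hrC : r * exp (M * (b - t₁)) ≤ 1 / 2) :
    ∀ u ∈ Icc t₁ b, f u ∈ K := by
  set φ : ℝ → ℝ := fun u => dist (f u) (g u) with hφ
  have hφc : Continuous φ :=
    Continuous.dist (continuous_iff_continuousAt.2 fun s => (hf' s).continuousAt)
      (continuous_iff_continuousAt.2 fun s => (hg' s).continuousAt)
  have hone : (1:ℝ) ≤ exp (M * (b - t₁)) :=
    one_le_exp (mul_nonneg M.coe_nonneg (by linarith))
  set S : Set ℝ := {u ∈ Icc t₁ b | ∀ z ∈ Icc t₁ u, φ z ≤ 1} with hSdef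
  have hmemS : t₁ ∈ S := by
    refine ⟨⟨le_refl _, htb⟩, fun z hz => ?_⟩
    rw [le_antisymm hz.2 hz.1]
    nlinarith
  have hne : S.Nonempty := ⟨t₁, hmemS⟩
  have hbdd : BddAbove S := ⟨b, fun z hz => hz.1.2⟩
  set u' := sSup S with hu'
  have hu'mem : u' ∈ Icc t₁ b := ⟨le_csSup hbdd hmemS, csSup_le hne fun z hz => hz.1.2⟩
  have hico : ∀ z ∈ Ico t₁ u', φ z ≤ 1 := by
    intro z hz
    obtain ⟨s, hsS, hzs⟩ := exists_lt_of_lt_csSup hne hz.2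
    exact hsS.2 z ⟨hz.1, le_of_lt hzs⟩
  have hfK : ∀ z ∈ Ico t₁ u', f z ∈ K := fun z hz =>
    hΓK (g z) (hgΓ z ⟨hz.1, (le_of_lt hz.2).trans hu'mem.2⟩) (f z) (hico z hz)
  have hgK : ∀ z ∈ Ico t₁ u', g z ∈ K := fun z hz =>
    hΓK (g z) (hgΓ z ⟨hz.1, (le_of_lt hz.2).trans hu'mem.2⟩) (g z) (by simp [dist_self])
  have key : ∀ z ∈ Icc t₁ u', φ z ≤ 1 / 2 := by
    intro z hz
    have h1 := gron_fwd hf' hg' (fun s hs => hlip s ⟨hs.1, hs.2.trans hu'mem.2⟩) hfK hgK hd0 z hz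
    refine h1.trans ?_
    have h2 : exp (↑M * (z - t₁)) ≤ exp (↑M * (b - t₁)) :=
      exp_le_exp.2 (mul_le_mul_of_nonneg_left (by linarith [hz.2, hu'mem.2]) M.coe_nonneg)
    nlinarith [exp_pos (↑M * (z - t₁))]
  have hu'b : u' = b := by
    by_contra hne'
    have hlt : u' < b := lt_of_le_of_ne hu'mem.2 hne'
    have hφu : φ u' < 1 := by
      have := key u' ⟨hu'mem.1, le_refl _⟩
      linarith
    have hev : φ ⁻¹' (Iio 1) ∈ nhds u' :=
      (isOpen_Iio.preimage hφc).mem_nhds hφu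
    obtain ⟨δ, hδpos, hδ⟩ := Metric.mem_nhds_iff.1 hev
    set u'' := min b (u' + δ / 2) with hu''
    have hu''S : u'' ∈ S := by
      refine ⟨⟨le_trans hu'mem.1 ?_, min_le_left _ _⟩, ?_⟩
      · apply le_min hu'mem.2; linarith
      · intro z hz
        rcases lt_or_ge z u' with h | h
        · exact hico z ⟨hz.1, h⟩
        · have hz2 : z ≤ u' + δ / 2 := le_trans hz.2 (min_le_right _ _)
          have : z ∈ ball u' δ := by
            rw [mem_ball, Real.dist_eq, abs_lt]
            constructor <;> linarith
          exact le_of_lt (hδ this)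
    have h1 : u'' ≤ u' := le_csSup hbdd hu''S
    have h2 : u' < u'' := lt_min hlt (by linarith)
    linarith
  rw [hu'b] at key
  intro u hu
  exact hΓK (g u) (hgΓ u hu) (f u) (le_trans (key u hu) (by norm_num))

/-- Two-sided bootstrap anchored at the initial time. -/
lemma boot (hα : IsFlowMap v t₀ α) {a b : ℝ} (hab : t₀ ∈ Icc a b)
    {x₀ : V3} {Γ K : Set V3} {M : NNReal} {r : ℝ}
    (hlip : ∀ u ∈ Icc a b, LipschitzOnWith M (v u) K)
    (hΓ : ∀ u ∈ Icc a b, α u x₀ ∈ Γ)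
    (hΓK : ∀ z ∈ Γ, ∀ y : V3, dist y z ≤ 1 → y ∈ K)
    (hr0 : 0 ≤ r) (hrC : r * exp (M * (b - a)) ≤ 1 / 2) :
    ∀ x ∈ closedBall x₀ r, ∀ u ∈ Icc a b, α u x ∈ K := by
  have hexp : ∀ c : ℝ, c ≤ b - a → r * exp (M * c) ≤ 1 / 2 := by
    intro c hc
    refine le_trans ?_ hrC
    exact mul_le_mul_of_nonneg_left (exp_le_exp.2 (mul_le_mul_of_nonneg_left hc M.coe_nonneg)) hr0
  intro x hx u hu
  have hd0 : dist x x₀ ≤ r := mem_closedBall.1 hx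
  rcases le_total t₀ u with h | h
  · have key := boot_fwd (t₁ := t₀) (b := b) (Γ := Γ) (K := K) hab.2
      (fun s => hα.2.2 s x) (fun s => hα.2.2 s x₀)
      (fun s hs => hlip s ⟨hab.1.trans hs.1, hs.2⟩)
      (fun s hs => hΓ s ⟨hab.1.trans hs.1, hs.2⟩) hΓK
      (by show dist (α t₀ x) (α t₀ x₀) ≤ r
          rw [hα.1 x, hα.1 x₀]; exact hd0) hr0
      (hexp _ (by linarith [hab.1]))
    exact key u ⟨h, hu.2⟩
  · set c := (2:ℝ) * t₀ with hc
    have key := boot_fwd (t₁ := t₀) (b := c - a) (Γ := Γ) (K := K)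
      (by simp only [hc]; linarith [hab.1])
      (rev_hasDeriv c (fun s => hα.2.2 s x))
      (rev_hasDeriv c (fun s => hα.2.2 s x₀))
      (fun s hs => lipschitzOnWith_neg (hlip (c - s) ⟨by simp only [hc] at hs ⊢; linarith [hs.2], by simp only [hc] at hs ⊢; linarith [hs.1, hab.2]⟩))
      (fun s hs => hΓ (c - s) ⟨by simp only [hc] at hs ⊢; linarith [hs.2], by simp only [hc] at hs ⊢; linarith [hs.1, hab.2]⟩)
      hΓK
      (by show dist (α (c - t₀) x) (α (c - t₀) x₀) ≤ r
          rw [show c - t₀ = t₀ by simp only [hc]; ring, hα.1 x, hα.1 x₀]; exact hd0) hr0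
      (hexp _ (by simp only [hc]; linarith [hab.2]))
    have hk := key (c - u) ⟨by simp only [hc]; linarith, by simp only [hc]; linarith [hu.1]⟩
    simpa [show c - (c - u) = u by ring] using hk

/-- Local containment and uniform bounds. -/
lemma loc (hv : ContDiff ℝ 1 (fun p : ℝ × V3 => v p.1 p.2))
    (hα : IsFlowMap v t₀ α) (x₀ : V3) {a b : ℝ} (hab : t₀ ∈ Icc a b) :
    ∃ r > 0, ∃ C : ℝ, 1 ≤ C ∧
      ∀ u ∈ Icc a b, ∀ y ∈ ball x₀ r, ‖A α u y‖ ≤ C ∧ ‖vd v u (α u y)‖ ≤ C := by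
  have hab' : a ≤ b := hab.1.trans hab.2
  set Γ : Set V3 := (fun u => α u x₀) '' Icc a b with hΓdef
  have hΓc : IsCompact Γ := isCompact_Icc.image (traj_cont hα x₀)
  obtain ⟨R, hR⟩ := hΓc.isBounded.subset_closedBall 0
  set K : Set V3 := closedBall (0:V3) (R + 1) with hKdef
  have hKc : IsCompact K := isCompact_closedBall _ _
  have hΓK : ∀ z ∈ Γ, ∀ y : V3, dist y z ≤ 1 → y ∈ K := by
    intro z hz y hy
    have h1 : dist z (0:V3) ≤ R := mem_closedBall.1 (hR hz)
    have : dist y (0:V3) ≤ R + 1 := le_trans (dist_triangle y z 0) (by linarith)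
    exact mem_closedBall.2 this
  obtain ⟨M₀, hM₀⟩ := (isCompact_Icc.prod hKc).exists_bound_of_continuousOn
    ((vd_cont hv).comp (continuous_fst.prodMk continuous_snd)).continuousOn
  set M : NNReal := (max M₀ 0).toNNReal with hMdef
  have hMcoe : (M : ℝ) = max M₀ 0 := Real.coe_toNNReal _ (le_max_right _ _)
  have hvdM : ∀ u ∈ Icc a b, ∀ z ∈ K, ‖vd v u z‖ ≤ M := by
    intro u hu z hz
    rw [hMcoe]
    exact le_trans (by simpa using hM₀ (u, z) (Set.mk_mem_prod hu hz)) (le_max_left _ _)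
  have hlip : ∀ u ∈ Icc a b, LipschitzOnWith M (v u) K := by
    intro u hu
    apply (convex_closedBall _ _).lipschitzOnWith_of_nnnorm_hasFDerivWithin_le
      (f' := fun z => vd v u z)
      (fun z hz => (hasFDerivAt_vd hv u z).hasFDerivWithinAt)
    intro z hz
    rw [← NNReal.coe_le_coe, coe_nnnorm]
    exact hvdM u hu z hz
  set E₀ : ℝ := exp (M * (b - a)) with hE₀
  have hE₀1 : (1:ℝ) ≤ E₀ := one_le_exp (mul_nonneg M.coe_nonneg (by linarith))
  have hE₀pos : (0:ℝ) < E₀ := lt_of_lt_of_le one_pos hE₀1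
  set r : ℝ := 1 / (2 * E₀) with hr
  have hrpos : 0 < r := by positivity
  have hE₀ne : E₀ ≠ 0 := ne_of_gt hE₀pos
  have hrC : r * E₀ ≤ 1 / 2 := le_of_eq (by rw [hr]; field_simp)
  have hcont : ∀ x ∈ closedBall x₀ r, ∀ u ∈ Icc a b, α u x ∈ K :=
    boot hα hab hlip (fun u hu => Set.mem_image_of_mem _ hu) hΓK (le_of_lt hrpos) hrC
  refine ⟨r, hrpos, max E₀ M, le_trans hE₀1 (le_max_left _ _), ?_⟩
  intro u hu y hy
  constructor
  · have hlipα : LipschitzOnWith E₀.toNNReal (α u) (ball x₀ r) := by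
      apply LipschitzOnWith.of_dist_le_mul
      intro p hp q hq
      have h3 := gron hα hab hlip
        (fun s hs => hcont p (ball_subset_closedBall hp) s hs)
        (fun s hs => hcont q (ball_subset_closedBall hq) s hs) u hu
      rw [Real.coe_toNNReal _ (le_of_lt hE₀pos), mul_comm E₀ (dist p q)]
      exact h3
    have := (hA hα u y).le_of_lipschitzOn (isOpen_ball.mem_nhds hy) hlipα
    refine le_trans (by simpa [Real.coe_toNNReal _ (le_of_lt hE₀pos)] using this) (le_max_left _ _)
  · exact le_trans (hvdM u hu _ (hcont y (ball_subset_closedBall hy) u hu)) (le_max_right _ _)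

/-- Uniform bounds over a compact spatial set. -/
lemma ub (hv : ContDiff ℝ 1 (fun p : ℝ × V3 => v p.1 p.2))
    (hα : IsFlowMap v t₀ α) {S : Set V3} (hS : IsCompact S) {a b : ℝ} (hab : t₀ ∈ Icc a b) :
    ∃ C : ℝ, 1 ≤ C ∧
      ∀ u ∈ Icc a b, ∀ y ∈ S, ‖A α u y‖ ≤ C ∧ ‖vd v u (α u y)‖ ≤ C := by
  choose r hr C hC hbound using fun x₀ : V3 => loc hv hα x₀ hab
  obtain ⟨t, -, ht⟩ := hS.elim_nhds_subcover (fun x₀ => ball x₀ (r x₀))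
    (fun x₀ _ => ball_mem_nhds x₀ (hr x₀))
  refine ⟨1 + ∑ i ∈ t, C i, le_add_of_nonneg_right (Finset.sum_nonneg fun i _ => le_trans zero_le_one (hC i)), ?_⟩
  intro u hu y hy
  obtain ⟨x₀, hx₀t, hx₀⟩ := Set.mem_iUnion₂.1 (ht hy)
  have hCsum : C x₀ ≤ 1 + ∑ i ∈ t, C i := by
    have h1 : C x₀ ≤ ∑ i ∈ t, C i :=
      Finset.single_le_sum (fun i _ => le_trans zero_le_one (hC i)) hx₀t
    linarith
  obtain ⟨h1, h2⟩ := hbound x₀ u hu y hx₀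
  exact ⟨h1.trans hCsum, h2.trans hCsum⟩

lemma measA (hα : IsFlowMap v t₀ α) (x : V3) : Measurable fun u => A α u x := by
  have hlim : ∀ (j : Fin 3) (u : ℝ), Filter.Tendsto
        (fun n : ℕ => ((n:ℝ))⁻¹⁻¹ • (α u (x + ((n:ℝ))⁻¹ • (Pi.single j 1 : V3)) - α u x))
        Filter.atTop (nhds (A α u x (Pi.single j 1))) := by
      intro j u
      have hline : HasDerivAt (fun h : ℝ => α u (x + h • (Pi.single j 1 : V3)))
          (A α u x (Pi.single j 1)) 0 := by
        have h1 : HasDerivAt (fun h : ℝ => x + h • (Pi.single j 1 : V3))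
            (Pi.single j 1) 0 := by
          simpa using ((hasDerivAt_id (0:ℝ)).smul_const (Pi.single j 1 : V3)).const_add x
        have h2 := (hA hα u (x + (0:ℝ) • (Pi.single j 1 : V3))).comp_hasDerivAt 0 h1
        simpa [Function.comp_def] using h2
      have hslope := hasDerivAt_iff_tendsto_slope.1 hline
      have htend : Filter.Tendsto (fun n : ℕ => ((n:ℝ))⁻¹) Filter.atTop
          (nhdsWithin 0 {(0:ℝ)}ᶜ) := by
        apply tendsto_nhdsWithin_of_tendsto_nhds_of_eventually_within
        · exact tendsto_inv_atTop_nhds_zero_nat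
        · filter_upwards [Filter.eventually_gt_atTop 0] with n hn
          have hne0 : (n:ℝ) ≠ 0 := Nat.cast_ne_zero.2 hn.ne'
          simpa using inv_ne_zero hne0
      have hcomp := hslope.comp htend
      refine hcomp.congr fun n => ?_
      show slope (fun h : ℝ => α u (x + h • (Pi.single j 1 : V3))) 0 ((n:ℝ))⁻¹ = _
      rw [slope_def_module]
      simp
  have hm : ∀ j : Fin 3, Measurable fun u => A α u x (Pi.single j 1) := by
    intro j
    apply measurable_of_tendsto_metrizable
      (f := fun n : ℕ => fun u => ((n:ℝ))⁻¹⁻¹ • (α u (x + ((n:ℝ))⁻¹ • (Pi.single j 1 : V3)) - α u x))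
    · intro n
      exact ((continuous_const (y := ((n:ℝ))⁻¹⁻¹)).smul ((traj_cont hα _).sub (traj_cont hα x))).measurable
    · exact tendsto_pi_nhds.2 (hlim j)
  have heq : (fun u => A α u x) = fun u =>
      ∑ j, (ContinuousLinearMap.proj j : V3 →L[ℝ] ℝ).smulRight (A α u x (Pi.single j 1)) := by
    funext u
    apply clm_ext_basis
    intro j
    rw [ContinuousLinearMap.sum_apply]
    simp only [ContinuousLinearMap.smulRight_apply, ContinuousLinearMap.proj_apply]
    have hsum : ∑ k : Fin 3, (Pi.single j 1 : V3) k • A α u x (Pi.single k 1)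
        = ∑ k : Fin 3, (if k = j then (1:ℝ) else 0) • A α u x (Pi.single k 1) :=
      Finset.sum_congr rfl fun k _ => by rw [Pi.single_apply]
    rw [hsum]
    simp
  rw [heq]
  apply Finset.measurable_sum
  intro j _
  exact ((ContinuousLinearMap.smulRightL ℝ V3 V3
    (ContinuousLinearMap.proj j)).continuous.measurable).comp (hm j)

/-- The variational equation. -/
lemma lemB (hv : ContDiff ℝ 1 (fun p : ℝ × V3 => v p.1 p.2))
    (hα : IsFlowMap v t₀ α) (t : ℝ) (x : V3) :
    HasDerivAt (fun s => A α s x) ((vd v t (α t x)).comp (A α t x)) t := by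
  set a' := min t₀ t - 1 with ha'
  set b' := max t₀ t + 1 with hb'
  have hab : t₀ ∈ Icc a' b' :=
    ⟨by simp only [ha']; linarith [min_le_left t₀ t], by simp only [hb']; linarith [le_max_left t₀ t]⟩
  have htJ : t ∈ Ioo a' b' :=
    ⟨by simp only [ha']; linarith [min_le_right t₀ t], by simp only [hb']; linarith [le_max_right t₀ t]⟩
  obtain ⟨r, hr, C, hC1, hCb⟩ := loc hv hα x hab
  set g : ℝ → V3 →L[ℝ] V3 := fun u => (vd v u (α u x)).comp (A α u x) with hg
  have hvc : ∀ y : V3, Continuous fun u => v u (α u y) := fun y =>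
    hv.continuous.comp (continuous_id.prodMk (traj_cont hα y))
  have hvdc : Continuous fun u => vd v u (α u x) :=
    (vd_cont hv).comp (continuous_id.prodMk (traj_cont hα x))
  have hgmeas : Measurable g := by
    have h4 : Measurable fun u => (vd v u (α u x), A α u x) :=
      hvdc.measurable.prodMk (measA hα x)
    exact (isBoundedBilinearMap_comp.continuous.measurable).comp h4
  have hIccJ : ∀ {c d z : ℝ}, c ∈ Icc a' b' → d ∈ Icc a' b' → z ∈ Set.uIoc c d → z ∈ Icc a' b' := by
    intro c d z hc hd hz
    rw [Set.mem_uIoc] at hz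
    rcases hz with ⟨h1, h2⟩ | ⟨h1, h2⟩
    · exact ⟨by linarith [hc.1], by linarith [hd.2]⟩
    · exact ⟨by linarith [hd.1], by linarith [hc.2]⟩
  have hgC : ∀ {z : ℝ}, z ∈ Icc a' b' → ∀ y ∈ ball x r,
      ‖(vd v z (α z y)).comp (A α z y)‖ ≤ C * C := by
    intro z hz y hy
    obtain ⟨h1, h2⟩ := hCb z hz y hy
    calc ‖(vd v z (α z y)).comp (A α z y)‖ ≤ ‖vd v z (α z y)‖ * ‖A α z y‖ :=
          ContinuousLinearMap.opNorm_comp_le _ _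
      _ ≤ C * C := mul_le_mul h2 h1 (norm_nonneg _) (by linarith)
  have eqn : ∀ c ∈ Icc a' b', ∀ d ∈ Icc a' b',
      A α d x - A α c x = ∫ u in c..d, g u := by
    intro c hc d hd
    have hkey := intervalIntegral.hasFDerivAt_integral_of_dominated_of_fderiv_le
      (F := fun y u => v u (α u y))
      (F' := fun y u => (vd v u (α u y)).comp (A α u y))
      (x₀ := x) (bound := fun _ => C * C) (a := c) (b := d) (μ := volume) (ball_mem_nhds x hr)
      (Filter.Eventually.of_forall fun y => (hvc y).aestronglyMeasurable)
      ((hvc x).intervalIntegrable c d)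
      hgmeas.aestronglyMeasurable
      (Filter.Eventually.of_forall fun u hu y hy => hgC (hIccJ hc hd hu) y hy)
      intervalIntegrable_const
      (Filter.Eventually.of_forall fun u _ y _ =>
        (hasFDerivAt_vd hv u (α u y)).comp y (hA hα u y))
    have hFTC : (fun y => ∫ u in c..d, v u (α u y)) = fun y => α d y - α c y := by
      funext y
      exact intervalIntegral.integral_eq_sub_of_hasDerivAt (fun u _ => hα.2.2 u y)
        ((hvc y).intervalIntegrable c d)
    rw [hFTC] at hkey
    exact (hkey.unique ((hA hα d x).sub (hA hα c x))).symm
  have hcontA : ∀ u ∈ Ioo a' b', ContinuousAt (fun s => A α s x) u := by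
    intro u hu
    have hIcc : Icc a' b' ∈ nhds u := Icc_mem_nhds hu.1 hu.2
    have hlip : LipschitzOnWith (C * C).toNNReal (fun s => A α s x) (Icc a' b') := by
      apply LipschitzOnWith.of_dist_le_mul
      intro p hp q hq
      rw [dist_eq_norm, Real.coe_toNNReal _ (by positivity : (0:ℝ) ≤ C * C)]
      rw [show A α p x - A α q x = ∫ u in q..p, g u from eqn q hq p hp]
      calc ‖∫ u in q..p, g u‖ ≤ C * C * |p - q| :=
            intervalIntegral.norm_integral_le_of_norm_le_const fun z hz =>
              hgC (hIccJ hq hp hz) x (mem_ball_self hr)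
        _ = C * C * dist p q := by rw [Real.dist_eq]
    exact hlip.continuousOn.continuousAt hIcc
  have hgc : ContinuousAt g t := by
    have h2 : ContinuousAt (fun s => A α s x) t := hcontA t htJ
    exact (isBoundedBilinearMap_comp.continuous.continuousAt).comp
      (hvdc.continuousAt.prodMk h2)
  have hprim : HasDerivAt (fun d => ∫ u in t..d, g u) (g t) t := by
    apply intervalIntegral.integral_hasDerivAt_right
    · exact IntervalIntegrable.refl
    · exact ⟨univ, Filter.univ_mem, hgmeas.aestronglyMeasurable.restrict⟩
    · exact hgc
  have heq : (fun s => A α s x) =ᶠ[nhds t] fun d => A α t x + ∫ u in t..d, g u := by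
    filter_upwards [Ioo_mem_nhds htJ.1 htJ.2] with d hd
    have h5 := eqn t (Ioo_subset_Icc_self htJ) d (Ioo_subset_Icc_self hd)
    rw [← h5]
    abel
  exact ((hprim.const_add (A α t x)).congr_of_eventuallyEq heq)

end flow

section det

/-- Derivative of a 3×3 determinant along a path whose derivative is `b * M`. -/
lemma det3_hasDerivAt {m : ℝ → Matrix (Fin 3) (Fin 3) ℝ} {b M : Matrix (Fin 3) (Fin 3) ℝ}
    {t : ℝ} (hm : ∀ i j, HasDerivAt (fun s => m s i j) ((b * M) i j) t) (hMt : m t = M) :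
    HasDerivAt (fun s => (m s).det) ((b 0 0 + b 1 1 + b 2 2) * M.det) t := by
  have e : (fun s => (m s).det) = fun s =>
      m s 0 0 * (m s 1 1 * m s 2 2) - m s 0 0 * (m s 1 2 * m s 2 1)
      - m s 0 1 * (m s 1 0 * m s 2 2) + m s 0 1 * (m s 1 2 * m s 2 0)
      + m s 0 2 * (m s 1 0 * m s 2 1) - m s 0 2 * (m s 1 1 * m s 2 0) := by
    funext s
    rw [Matrix.det_fin_three]
    ring
  rw [e]
  have h1 := (hm 0 0).fun_mul ((hm 1 1).fun_mul (hm 2 2))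
  have h2 := (hm 0 0).fun_mul ((hm 1 2).fun_mul (hm 2 1))
  have h3 := (hm 0 1).fun_mul ((hm 1 0).fun_mul (hm 2 2))
  have h4 := (hm 0 1).fun_mul ((hm 1 2).fun_mul (hm 2 0))
  have h5 := (hm 0 2).fun_mul ((hm 1 0).fun_mul (hm 2 1))
  have h6 := (hm 0 2).fun_mul ((hm 1 1).fun_mul (hm 2 0))
  have H := ((((h1.fun_sub h2).fun_sub h3).fun_add h4).fun_add h5).fun_sub h6
  refine H.congr_deriv ?_
  subst hMt
  simp only [Matrix.mul_apply, Fin.sum_univ_three, Matrix.det_fin_three]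
  ring

variable {v : ℝ → V3 → V3} {t₀ : ℝ} {α : ℝ → V3 → V3}

lemma matOf_comp (P Q : V3 →L[ℝ] V3) : matOf (P.comp Q) = matOf P * matOf Q := by
  rw [← toMatrix'_eq_matOf, ← toMatrix'_eq_matOf, ← toMatrix'_eq_matOf,
    ContinuousLinearMap.toLinearMap_comp, LinearMap.toMatrix'_comp]

/-- Liouville's formula for the Jacobian determinant. -/
lemma lemC (hv : ContDiff ℝ 1 (fun p : ℝ × V3 => v p.1 p.2))
    (hα : IsFlowMap v t₀ α) (t : ℝ) (x : V3) :
    HasDerivAt (fun s => (A α s x).det)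
      ((∑ a, vd v t (α t x) (Pi.single a 1) a) * (A α t x).det) t := by
  have hB := lemB hv hα t x
  have hm : ∀ i j, HasDerivAt (fun s => matOf (A α s x) i j)
      ((matOf (vd v t (α t x)) * matOf (A α t x)) i j) t := by
    intro i j
    have h1 := (((ContinuousLinearMap.proj i : V3 →L[ℝ] ℝ).comp
        (ContinuousLinearMap.apply ℝ V3 (Pi.single j 1))).hasFDerivAt).comp_hasDerivAt t hB
    have hval : ((ContinuousLinearMap.proj i : V3 →L[ℝ] ℝ).comp
        (ContinuousLinearMap.apply ℝ V3 (Pi.single j 1))) ((vd v t (α t x)).comp (A α t x))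
        = (matOf (vd v t (α t x)) * matOf (A α t x)) i j := by
      rw [← matOf_comp]
      rfl
    rw [← hval]
    exact h1
  have hd := det3_hasDerivAt hm rfl
  have e1 : (fun s => (matOf (A α s x)).det) = fun s => (A α s x).det :=
    funext fun s => matOf_det _
  rw [e1] at hd
  convert hd using 1
  rw [matOf_det]
  congr 1
  rw [Fin.sum_univ_three]
  rfl

lemma det_pos (hv : ContDiff ℝ 1 (fun p : ℝ × V3 => v p.1 p.2))
    (hα : IsFlowMap v t₀ α) (s : ℝ) (x : V3) : 0 < (A α s x).det := by
  have hcont : Continuous fun u => (A α u x).det :=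
    continuous_iff_continuousAt.2 fun u => (lemC hv hα u x).continuousAt
  have h1 : (A α t₀ x).det = 1 := by
    have hid : α t₀ = fun y => y := funext hα.1
    rw [A, hid, fderiv_id']
    simp [ContinuousLinearMap.det]
  have hne : ∀ u, (A α u x).det ≠ 0 := by
    intro u
    have hβ := (hα.2.1 u).2.2
    have hinj := (hα.2.1 u).1.injective
    have hcomp : Function.invFun (α u) ∘ α u = id :=
      funext fun y => Function.leftInverse_invFun hinj y
    have hfd : HasFDerivAt (Function.invFun (α u) ∘ α u)
        ((fderiv ℝ (Function.invFun (α u)) (α u x)).comp (A α u x)) x :=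
      ((hβ.differentiable one_ne_zero _).hasFDerivAt).comp x (hA hα u x)
    rw [hcomp] at hfd
    have hid := hfd.unique (hasFDerivAt_id x)
    have hdet := congrArg ContinuousLinearMap.det hid
    simp only [ContinuousLinearMap.det, ContinuousLinearMap.toLinearMap_comp, LinearMap.det_comp,
      ContinuousLinearMap.coe_id, LinearMap.det_id] at hdet
    exact right_ne_zero_of_mul_eq_one hdet
  by_contra hle
  push_neg at hle
  have hlt : (A α s x).det < 0 := lt_of_le_of_ne hle (hne s)
  have hiv := intermediate_value_uIcc (a := t₀) (b := s)
    (f := fun u => (A α u x).det) hcont.continuousOn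
  have h0 : (0:ℝ) ∈ uIcc ((A α t₀ x).det) ((A α s x).det) := by
    rw [h1]
    exact Set.mem_uIcc.2 (Or.inr ⟨hlt.le, zero_le_one⟩)
  obtain ⟨u, _, hu0⟩ := hiv h0
  exact hne u hu0

end det

section cov

variable {v : ℝ → V3 → V3} {t₀ : ℝ} {α : ℝ → V3 → V3}

lemma cov (hv : ContDiff ℝ 1 (fun p : ℝ × V3 => v p.1 p.2)) (hα : IsFlowMap v t₀ α)
    {G : Set V3} (hGo : IsOpen G) (s : ℝ) (g : V3 → ℝ) :
    ∫ y in α s '' G, g y = ∫ x in G, (A α s x).det * g (α s x) := by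
  rw [integral_image_eq_integral_abs_det_fderiv_smul volume hGo.measurableSet
    (fun x _ => (hA hα s x).hasFDerivWithinAt) ((hα.2.1 s).1.injective.injOn) g]
  apply setIntegral_congr_fun hGo.measurableSet
  intro x _
  beta_reduce
  rw [abs_of_pos (det_pos hv hα s x), smul_eq_mul]

lemma cov_one (hv : ContDiff ℝ 1 (fun p : ℝ × V3 => v p.1 p.2)) (hα : IsFlowMap v t₀ α)
    {G : Set V3} (hGo : IsOpen G) (s : ℝ) :
    (volume (α s '' G)).toReal = ∫ x in G, (A α s x).det := by
  have h := cov hv hα hGo s (fun _ => (1:ℝ))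
  rw [setIntegral_const] at h
  simpa [Measure.real] using h

end cov

end Liouville

open Liouville Set Metric in
/-- Liouville formula: the volume `V(t) = vol(α(t,G))` of a comoving domain is
differentiable with `V'(t) = ∫_{G_t} div v d³x`. -/
theorem liouville_volume_formula (v : ℝ → V3 → V3)
    (hv : ContDiff ℝ 1 (fun p : ℝ × V3 => v p.1 p.2))
    (t₀ : ℝ) (α : ℝ → V3 → V3) (hα : IsFlowMap v t₀ α)
    (G : Set V3) (hGo : IsOpen G) (hGb : Bornology.IsBounded G)
    (hGpos : 0 < volume G) (hGfin : volume G < ⊤) :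
    ∀ t, HasDerivAt (fun s => (volume (α s '' G)).toReal)
      (∫ x in α t '' G, ∑ a, pd (fun y => v t y a) a x) t := by
  intro t
  set a' := min t₀ (t - 1) with ha'
  set b' := max t₀ (t + 1) with hb'
  have hab : t₀ ∈ Icc a' b' := ⟨min_le_left _ _, le_max_left _ _⟩
  have hball : ∀ s ∈ ball t 1, s ∈ Icc a' b' := by
    intro s hs
    rw [mem_ball, Real.dist_eq, abs_lt] at hs
    exact ⟨le_trans (min_le_right _ _) (by linarith), le_trans (by linarith) (le_max_right _ _)⟩
  have htI : t ∈ Icc a' b' :=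
    ⟨le_trans (min_le_right _ _) (by linarith), le_trans (by linarith) (le_max_right _ _)⟩
  have hclos : IsCompact (closure G) := hGb.isCompact_closure
  obtain ⟨C, hC1, hC⟩ := ub hv hα hclos hab
  have hGm := hGo.measurableSet
  have hfun : (fun s => (volume (α s '' G)).toReal) = fun s => ∫ x in G, (A α s x).det :=
    funext fun s => cov_one hv hα hGo s
  have htrv : ∀ x : V3, (∑ a, pd (fun y => v t y a) a (α t x))
      = ∑ a, vd v t (α t x) (Pi.single a 1) a := by
    intro x
    apply Finset.sum_congr rfl
    intro a _
    have hfd0 := (ContinuousLinearMap.proj (R := ℝ) (φ := fun _ : Fin 3 => ℝ)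
      a).hasFDerivAt.comp (α t x) (hasFDerivAt_vd hv t (α t x))
    have hfd : HasFDerivAt (fun y => v t y a)
        ((ContinuousLinearMap.proj a).comp (vd v t (α t x))) (α t x) := hfd0
    rw [pd, hfd.fderiv]
    rfl
  have hint : (∫ x in α t '' G, ∑ a, pd (fun y => v t y a) a x)
      = ∫ x in G, (∑ a, vd v t (α t x) (Pi.single a 1) a) * (A α t x).det := by
    rw [cov hv hα hGo t (fun y => ∑ a, pd (fun z => v t z a) a y)]
    apply setIntegral_congr_fun hGm
    intro x _
    beta_reduce
    rw [htrv x]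
    ring
  rw [hfun, hint]
  have hbG : ∀ s ∈ Icc a' b', ∀ x ∈ G, ‖A α s x‖ ≤ C ∧ ‖vd v s (α s x)‖ ≤ C :=
    fun s hs x hx => hC s hs x (subset_closure hx)
  have hdet_bound : ∀ s ∈ Icc a' b', ∀ x ∈ G, |(A α s x).det| ≤ 6 * C ^ 3 :=
    fun s hs x hx => abs_det_le (hbG s hs x hx).1
  have htrv_bound : ∀ s ∈ Icc a' b', ∀ x ∈ G,
      |∑ a, vd v s (α s x) (Pi.single a 1) a| ≤ 3 * C := by
    intro s hs x hx
    have h1 : ∀ a : Fin 3, |vd v s (α s x) (Pi.single a 1) a| ≤ C := fun a =>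
      (matOf_entry_le (vd v s (α s x)) a a).trans (hbG s hs x hx).2
    calc |∑ a, vd v s (α s x) (Pi.single a 1) a|
        ≤ ∑ a, |vd v s (α s x) (Pi.single a 1) a| := Finset.abs_sum_le_sum_abs _ _
      _ ≤ ∑ _a : Fin 3, C := Finset.sum_le_sum fun a _ => h1 a
      _ = 3 * C := by
          rw [Finset.sum_const]
          simp [nsmul_eq_mul]
  have hcontF' : ∀ s : ℝ, Continuous fun x =>
      (∑ a, vd v s (α s x) (Pi.single a 1) a) * (A α s x).det := by
    intro s
    have h1 : Continuous fun x => vd v s (α s x) :=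
      (vd_cont hv).comp (continuous_const.prodMk (hα.2.1 s).2.1.continuous)
    have h2 : Continuous fun x => ∑ a, vd v s (α s x) (Pi.single a 1) a := by
      apply continuous_finset_sum
      intro a _
      exact (continuous_apply a).comp
        ((ContinuousLinearMap.apply ℝ V3 (Pi.single a 1)).continuous.comp h1)
    exact h2.mul (det_cont.comp (contA hα s))
  have hCpos : (0:ℝ) < C := lt_of_lt_of_le one_pos hC1
  have hint1 : Integrable (fun x => (A α t x).det) (volume.restrict G) := by
    apply Integrable.mono' (integrableOn_const hGfin.ne :
      IntegrableOn (fun _ : V3 => 6 * C ^ 3) G volume)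
      ((det_cont.comp (contA hα t)).aestronglyMeasurable)
    apply (ae_restrict_iff' hGm).2
    apply Filter.Eventually.of_forall
    intro x hx
    simpa using hdet_bound t htI x hx
  have hbnd1 : ∀ᵐ x ∂(volume.restrict G), ∀ s ∈ ball t 1,
      ‖(∑ a, vd v s (α s x) (Pi.single a 1) a) * (A α s x).det‖ ≤ 3 * C * (6 * C ^ 3) := by
    apply (ae_restrict_iff' hGm).2
    apply Filter.Eventually.of_forall
    intro x hx s hs
    rw [Real.norm_eq_abs, abs_mul]
    have hsJ := hball s hs
    exact mul_le_mul (htrv_bound s hsJ x hx) (hdet_bound s hsJ x hx) (abs_nonneg _)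
      (by positivity)
  have hdiff1 : ∀ᵐ x ∂(volume.restrict G), ∀ s ∈ ball t 1,
      HasDerivAt (fun s => (A α s x).det)
        ((∑ a, vd v s (α s x) (Pi.single a 1) a) * (A α s x).det) s :=
    Filter.Eventually.of_forall fun x s _ => lemC hv hα s x
  exact (hasDerivAt_integral_of_dominated_loc_of_deriv_le (ball_mem_nhds t one_pos)
    (Filter.Eventually.of_forall fun s =>
      ((det_cont.comp (contA hα s)).aestronglyMeasurable))
    hint1 ((hcontF' t).aestronglyMeasurable) hbnd1
    (integrableOn_const hGfin.ne) hdiff1).2
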